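/- Let (X, ρ, μ) be a compact metric measure space with a probability measure μ satisfying μ(B(x,r)) ≤ A r^q for all x, r, and let K : X × X → R satisfy |K(x,y)| ≤ n^q / max(1, n ρ(x,y))^S with S > q. Then sup_{x∈X} ∫_X |K(x,y)| dμ(y) ≤ c, where c depends only on A, q, S and not on n. -/

import Mathlib

open MeasureTheory Set

theorem kernel_lebesgue_constant_bound (A q S : ℝ) (hA : 0 < A) (hq : 1 ≤ q)
    (hS : q < S) :
    ∃ c > 0,
      ∀ (X : Type) [MetricSpace X] [CompactSpace X] [MeasurableSpace X]
        [BorelSpace X] (μ : Measure X) [IsProbabilityMeasure μ]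
        (K : X → X → ℝ) (n : ℝ), 1 ≤ n →
        (∀ (x : X) (r : ℝ), 0 < r → (μ (Metric.closedBall x r)).toReal ≤ A * r ^ q) →
        (∀ x y : X, |K x y| ≤ n ^ q / max 1 (n * dist x y) ^ S) →
        ∀ x : X, ∫ y, |K x y| ∂μ ≤ c := by
  have hSq : 0 < S - q := by linarith
  have hS0 : 0 < S := by linarith
  have hq0 : 0 < q := by linarith
  refine ⟨1 + A * S / (S - q), by positivity, ?_⟩
  intro X _ _ _ _ μ _ K n hn hball hK x
  by_cases hint : Integrable (fun y => |K x y|) μ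
  swap
  · rw [integral_undef hint]; positivity
  have hn0 : (0:ℝ) < n := by linarith
  have hf_nn : 0 ≤ᵐ[μ] fun y => |K x y| := Filter.Eventually.of_forall fun y => abs_nonneg _
  rw [integral_eq_lintegral_of_nonneg_ae hf_nn hint.aestronglyMeasurable]
  apply ENNReal.toReal_le_of_le_ofReal (by positivity)
  rw [lintegral_eq_lintegral_meas_lt μ hf_nn hint.aemeasurable]
  set B : ℝ := n ^ q with hB
  have hB1 : (1:ℝ) ≤ B := Real.one_le_rpow hn hq0.le
  set C : ℝ := A * n ^ (q * q / S - q) with hC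
  have hC0 : 0 < C := by positivity
  -- the measure of superlevel sets is zero above B
  have hempty : ∀ t : ℝ, B < t → {a : X | t < |K x a|} = ∅ := by
    intro t ht
    ext y
    simp only [mem_setOf_eq, mem_empty_iff_false, iff_false, not_lt]
    have h1 : (1:ℝ) ≤ max 1 (n * dist x y) := le_max_left _ _
    have h2 : (1:ℝ) ≤ max 1 (n * dist x y) ^ S := Real.one_le_rpow h1 hS0.le
    calc |K x y| ≤ n ^ q / max 1 (n * dist x y) ^ S := hK x y
      _ ≤ n ^ q / 1 := by
          apply div_le_div_of_nonneg_left (by positivity) one_pos h2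
      _ = B := by rw [div_one]
      _ ≤ t := ht.le
  -- the key superlevel bound
  have hkey : ∀ t : ℝ, 0 < t → μ {a : X | t < |K x a|} ≤ ENNReal.ofReal (C * t ^ (-(q / S))) := by
    intro t ht
    set r : ℝ := (n ^ q / t) ^ (1 / S) / n with hr
    have hr0 : 0 < r := by positivity
    have hsub : {a : X | t < |K x a|} ⊆ Metric.closedBall x r := by
      intro y hy
      simp only [mem_setOf_eq] at hy
      have hKy := hK x y
      set M : ℝ := max 1 (n * dist x y) with hM
      have hM1 : (1:ℝ) ≤ M := le_max_left _ _
      have hM0 : (0:ℝ) < M := lt_of_lt_of_le one_pos hM1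
      have hMS : (0:ℝ) < M ^ S := Real.rpow_pos_of_pos hM0 S
      have h1 : t * M ^ S < n ^ q := by
        have := lt_of_lt_of_le hy hKy
        rw [lt_div_iff₀ hMS] at this
        linarith
      have h2 : M ^ S < n ^ q / t := by
        rw [lt_div_iff₀ ht]; linarith [h1]
      have h3 : (n * dist x y) ^ S ≤ M ^ S :=
        Real.rpow_le_rpow (by positivity) (le_max_right _ _) hS0.le
      have h4 : (n * dist x y) ^ S < n ^ q / t := lt_of_le_of_lt h3 h2
      have h5 : n * dist x y < (n ^ q / t) ^ (1 / S) := by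
        have := Real.rpow_lt_rpow (z := 1 / S) (Real.rpow_nonneg (by positivity) S) h4 (by positivity)
        rwa [← Real.rpow_mul (by positivity), mul_one_div, div_self hS0.ne', Real.rpow_one] at this
      have : dist x y ≤ r := by
        rw [hr, le_div_iff₀ hn0]
        nlinarith [h5]
      simpa [Metric.mem_closedBall, dist_comm] using this
    calc μ {a : X | t < |K x a|} ≤ μ (Metric.closedBall x r) := measure_mono hsub
      _ ≤ ENNReal.ofReal (A * r ^ q) := by
          rw [ENNReal.le_ofReal_iff_toReal_le (measure_ne_top μ _) (by positivity)]
          exact hball x r hr0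
      _ = ENNReal.ofReal (C * t ^ (-(q / S))) := by
          congr 1
          have hrq : r ^ q = n ^ (q * q / S - q) * t ^ (-(q / S)) := by
            rw [hr, Real.div_rpow (by positivity) hn0.le,
              Real.div_rpow (by positivity) ht.le, ← Real.rpow_mul hn0.le,
              Real.div_rpow (by positivity) (by positivity),
              ← Real.rpow_mul hn0.le, ← Real.rpow_mul ht.le,
              Real.rpow_sub hn0,
              show q * (1 / S) * q = q * q / S by ring,
              show 1 / S * q = q / S by ring, Real.rpow_neg ht.le]
            ring
          rw [hC, hrq]; ring
  -- now split the integral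
  have hsplit : Ioi (0:ℝ) = Ioc 0 1 ∪ (Ioc 1 B ∪ Ioi B) := by
    rw [Ioc_union_Ioi_eq_Ioi hB1, Ioc_union_Ioi_eq_Ioi (zero_le_one)]
  calc ∫⁻ t in Ioi (0:ℝ), μ {a : X | t < |K x a|}
      ≤ (∫⁻ t in Ioc (0:ℝ) 1, μ {a : X | t < |K x a|}) +
        ((∫⁻ t in Ioc (1:ℝ) B, μ {a : X | t < |K x a|}) +
         (∫⁻ t in Ioi B, μ {a : X | t < |K x a|})) := by
        rw [hsplit]
        exact le_trans (lintegral_union_le _ _ _)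
          (add_le_add_right (lintegral_union_le _ _ _) _)
    _ ≤ 1 + (ENNReal.ofReal (A * S / (S - q)) + 0) := by
        gcongr
        · calc ∫⁻ t in Ioc (0:ℝ) 1, μ {a : X | t < |K x a|}
              ≤ ∫⁻ _ in Ioc (0:ℝ) 1, 1 := by
                apply setLIntegral_mono measurable_const
                intro t _
                exact le_trans (measure_mono (subset_univ _)) (by simp)
            _ = 1 := by rw [setLIntegral_one]; simp
        · calc ∫⁻ t in Ioc (1:ℝ) B, μ {a : X | t < |K x a|}
              ≤ ∫⁻ t in Ioc (1:ℝ) B, ENNReal.ofReal (C * t ^ (-(q / S))) := by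
                apply setLIntegral_mono
                · fun_prop
                · intro t ht
                  exact hkey t (lt_of_lt_of_le one_pos ht.1.le)
            _ = ENNReal.ofReal (∫ t in Ioc (1:ℝ) B, C * t ^ (-(q / S))) := by
                rw [ofReal_integral_eq_lintegral_ofReal]
                · apply IntegrableOn.mono_set (t := Icc (1:ℝ) B)
                  · apply ContinuousOn.integrableOn_Icc
                    apply ContinuousOn.mul continuousOn_const
                    intro t ht
                    exact (Real.continuousAt_rpow_const t _
                      (Or.inl (ne_of_gt (lt_of_lt_of_le one_pos ht.1)))).continuousWithinAt
                  · exact Ioc_subset_Icc_self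
                · refine (ae_restrict_iff' measurableSet_Ioc).2 (Filter.Eventually.of_forall fun t ht => ?_)
                  have : (0:ℝ) < t := lt_of_lt_of_le one_pos ht.1.le
                  positivity
            _ ≤ ENNReal.ofReal (A * S / (S - q)) := by
                apply ENNReal.ofReal_le_ofReal
                have hqS1 : q / S < 1 := (div_lt_one hS0).2 hS
                rw [← intervalIntegral.integral_of_le hB1, intervalIntegral.integral_const_mul,
                  integral_rpow (Or.inl (by linarith))]
                have h1 : -(q / S) + 1 = (S - q) / S := by field_simp; ring
                have hBpow : B ^ (-(q / S) + 1) = n ^ (q - q * q / S) := by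
                  rw [hB, ← Real.rpow_mul hn0.le, h1]
                  congr 1
                  field_simp
                have hCn : C * n ^ (q - q * q / S) = A := by
                  rw [hC, mul_assoc, ← Real.rpow_add hn0,
                    show q * q / S - q + (q - q * q / S) = 0 by ring,
                    Real.rpow_zero, mul_one]
                have hX0 : 0 < n ^ (q - q * q / S) := Real.rpow_pos_of_pos hn0 _
                rw [Real.one_rpow, hBpow, h1, div_div_eq_mul_div, mul_div_assoc',
                  div_le_div_iff₀ hSq hSq]
                have hid : C * ((n ^ (q - q * q / S) - 1) * S) * (S - q) =
                    A * S * (S - q) - C * (S * (S - q)) := by rw [← hCn]; ring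
                nlinarith [mul_pos hC0 (mul_pos hS0 hSq)]
        · calc ∫⁻ t in Ioi B, μ {a : X | t < |K x a|}
              ≤ ∫⁻ _ in Ioi B, 0 := by
                apply setLIntegral_mono measurable_const
                intro t ht
                rw [hempty t ht, measure_empty]
            _ = 0 := by simp
    _ ≤ ENNReal.ofReal (1 + A * S / (S - q)) := by
        rw [add_zero, ENNReal.ofReal_add (by norm_num) (by positivity)]
        simp
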